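/- For every natural number n ≥ 3, the following identity holds in ℚ: Σ_{i=1}^{n−3} C(n−1, i−1) · (n−i+1)^(n−i−1) · i^(i−2) = 2·(n+1)^(n−2) − n^(n−2) − (n−1)^(n−2) − (3/2)·(n−1)·(n−2)^(n−3), where all exponents are natural-number exponents with truncated subtraction (so the i = 1 term has i^(i−2) = 1^0 = 1, consistent with the intended value 1^(−1) = 1). -/

import Mathlib

open Finset

/-- n-th finite difference kills monomials of degree < n. -/
theorem findiff (j : ℕ) : ∀ n : ℕ, j < n →
    ∑ k ∈ range (n + 1), (-1 : ℚ) ^ k * (n.choose k) * (k : ℚ) ^ j = 0 := by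
  induction j using Nat.strong_induction_on with
  | _ j IH =>
    intro n hn
    match j, n, hn with
    | 0, (N+1), hn =>
      have h := add_pow (-1 : ℚ) 1 (N + 1)
      simp only [neg_add_cancel, one_pow, mul_one, zero_pow (Nat.succ_ne_zero N)] at h
      simpa using h.symm
    | (m+1), (N+1), hn =>
      rw [Finset.sum_range_succ']
      have h0 : (-1 : ℚ) ^ 0 * ((N+1).choose 0) * ((0:ℕ) : ℚ) ^ (m+1) = 0 := by simp
      rw [h0, add_zero]
      have hterm : ∀ i ∈ range (N + 1),
          (-1 : ℚ) ^ (i+1) * ((N+1).choose (i+1)) * ((i+1 : ℕ) : ℚ) ^ (m+1)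
            = (-((N:ℚ)+1)) * ((-1 : ℚ) ^ i * (N.choose i) * ((i:ℚ) + 1) ^ m) := by
        intro i _
        have hch : (((N+1).choose (i+1) : ℕ) : ℚ) * ((i:ℚ)+1) = ((N:ℚ)+1) * (N.choose i) := by
          have := congrArg (fun x : ℕ => (x : ℚ)) (Nat.add_one_mul_choose_eq N i).symm
          push_cast at this
          linarith
        push_cast
        linear_combination ((-1:ℚ)^(i+1) * ((i:ℚ)+1)^m) * hch
      rw [Finset.sum_congr rfl hterm, ← Finset.mul_sum]
      have hswap : ∑ i ∈ range (N + 1), (-1 : ℚ) ^ i * (N.choose i) * ((i:ℚ) + 1) ^ m = 0 := by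
        have hexp : ∀ i ∈ range (N+1), (-1 : ℚ) ^ i * (N.choose i) * ((i:ℚ) + 1) ^ m
            = ∑ r ∈ range (m+1), (m.choose r : ℚ) * ((-1 : ℚ) ^ i * (N.choose i) * (i:ℚ) ^ r) := by
          intro i _
          rw [add_pow (i:ℚ) 1 m, Finset.mul_sum]
          exact Finset.sum_congr rfl fun r _ => by ring
        rw [Finset.sum_congr rfl hexp, Finset.sum_comm]
        refine Finset.sum_eq_zero fun r hr => ?_
        rw [← Finset.mul_sum, IH r (Finset.mem_range.mp hr) N ?_, mul_zero]
        exact lt_of_lt_of_le (Finset.mem_range.mp hr) (Nat.lt_succ_iff.mp hn)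
      rw [hswap, mul_zero]

theorem findiff' (N : ℕ) :
    ∑ k ∈ range (N + 2), (-1 : ℚ) ^ k * ((N+1).choose k) * ((k : ℚ) + 1) ^ N = 0 := by
  have hexp : ∀ k ∈ range (N+2), (-1 : ℚ) ^ k * ((N+1).choose k) * ((k:ℚ) + 1) ^ N
      = ∑ r ∈ range (N+1), (N.choose r : ℚ) * ((-1 : ℚ) ^ k * ((N+1).choose k) * (k:ℚ) ^ r) := by
    intro k _
    rw [add_pow (k:ℚ) 1 N, Finset.mul_sum]
    exact Finset.sum_congr rfl fun r _ => by ring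
  rw [Finset.sum_congr rfl hexp, Finset.sum_comm]
  refine Finset.sum_eq_zero fun r hr => ?_
  rw [← Finset.mul_sum]
  rw [show N + 2 = (N+1) + 1 from rfl, findiff r (N+1) (Finset.mem_range.mp hr), mul_zero]


open Polynomial

theorem Gp_eq : ∀ (n : ℕ) (t : ℚ),
    (∑ k ∈ range (n+1), C ((n.choose k * (k+1)^(k-1) : ℕ) : ℚ) * (X + C (t + ((n-k : ℕ) : ℚ)))^(n-k))
      = (X + C (t + n + 1))^n := by
  intro n
  induction n with
  | zero => intro t; simp
  | succ n IH =>
    intro t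
    set q : ℚ[X] := (X + C (t + (n+1) + 1))^(n+1) with hq
    set p : ℚ[X] := ∑ k ∈ range (n+2), C (((n+1).choose k * (k+1)^(k-1) : ℕ) : ℚ) *
        (X + C (t + ((n+1-k : ℕ) : ℚ)))^(n+1-k) with hp
    have hder : derivative p = derivative q := by
      have hdq : derivative q = C ((n:ℚ)+1) * (X + C (t + (n+1) + 1))^n := by
        rw [hq, derivative_pow, derivative_X_add_C]
        push_cast
        ring_nf
      have hdp : derivative p =
          ∑ k ∈ range (n+2), C (((n+1).choose k * (k+1)^(k-1) : ℕ) : ℚ) *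
            (C ((n+1-k : ℕ) : ℚ) * (X + C (t + ((n+1-k : ℕ) : ℚ)))^(n-k)) := by
        rw [hp, derivative_sum]
        refine Finset.sum_congr rfl fun k hk => ?_
        have hk' : k < n + 2 := Finset.mem_range.mp hk
        rw [derivative_C_mul, derivative_pow, derivative_X_add_C, mul_one]
        have he : n + 1 - k - 1 = n - k := by omega
        rw [he]
      rw [hdp, hdq, Finset.sum_range_succ]
      have hlast : (C (((n+1).choose (n+1) * ((n+1)+1)^((n+1)-1) : ℕ) : ℚ) *
          (C ((n+1-(n+1) : ℕ) : ℚ) * (X + C (t + ((n+1-(n+1) : ℕ) : ℚ)))^(n-(n+1)))) = 0 := by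
        simp
      rw [hlast, add_zero]
      have hstep : ∀ k ∈ range (n+1),
          C (((n+1).choose k * (k+1)^(k-1) : ℕ) : ℚ) *
            (C ((n+1-k : ℕ) : ℚ) * (X + C (t + ((n+1-k : ℕ) : ℚ)))^(n-k))
          = C ((n:ℚ)+1) * (C ((n.choose k * (k+1)^(k-1) : ℕ) : ℚ) *
              (X + C ((t+1) + ((n-k : ℕ) : ℚ)))^(n-k)) := by
        intro k hk
        have hk' : k ≤ n := Nat.lt_succ_iff.mp (Finset.mem_range.mp hk)
        have h1 : ((n+1).choose k : ℚ) * ((n+1-k : ℕ) : ℚ) = ((n:ℚ)+1) * (n.choose k) := by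
          have hA := Nat.choose_succ_right_eq (n+1) k
          have hB := Nat.add_one_mul_choose_eq n k
          have hN : (n+1).choose k * (n+1-k) = (n+1) * n.choose k := by
            rw [← hA]
            exact hB.symm
          exact_mod_cast congrArg (fun x : ℕ => (x : ℚ)) hN
        have h2 : (t + ((n+1-k : ℕ) : ℚ)) = (t+1) + ((n-k : ℕ) : ℚ) := by
          rw [Nat.cast_sub (by omega), Nat.cast_sub hk']
          push_cast
          ring
        rw [h2]
        have hCC : (C (((n+1).choose k * (k+1)^(k-1) : ℕ) : ℚ)) * C ((n+1-k : ℕ) : ℚ)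
            = C ((n:ℚ)+1) * C ((n.choose k * (k+1)^(k-1) : ℕ) : ℚ) := by
          rw [← C_mul, ← C_mul]
          congr 1
          push_cast
          linear_combination (((k:ℚ)+1)^(k-1)) * h1
        linear_combination ((X + C ((t+1) + ((n-k : ℕ) : ℚ)))^(n-k)) * hCC
      rw [Finset.sum_congr rfl hstep, ← Finset.mul_sum, IH (t+1)]
      rw [show t + 1 + (n:ℚ) + 1 = t + ((n:ℚ)+1) + 1 from by ring]
    -- now use derivative equality plus evaluation at a point
    set a : ℚ := -(t + ((n+1 : ℕ) : ℚ) + 1) with ha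
    have hqe : q.eval a = 0 := by
      rw [hq]
      simp only [eval_pow, eval_add, eval_X, eval_C, ha]
      have hz : -(t + ((n+1 : ℕ) : ℚ) + 1) + (t + ((n:ℚ) + 1) + 1) = 0 := by push_cast; ring
      rw [hz]
      exact zero_pow (Nat.succ_ne_zero n)
    have hpe : p.eval a = 0 := by
      rw [hp, eval_finset_sum]
      have hterm : ∀ k ∈ range (n+2),
          eval a (C (((n+1).choose k * (k+1)^(k-1) : ℕ) : ℚ) *
            (X + C (t + ((n+1-k : ℕ) : ℚ)))^(n+1-k))
          = (-1:ℚ)^(n+1) * ((-1:ℚ)^k * ((n+1).choose k : ℚ) * ((k:ℚ)+1)^n) := by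
        intro k hk
        have hk' : k ≤ n + 1 := Nat.lt_succ_iff.mp (Finset.mem_range.mp hk)
        simp only [eval_mul, eval_pow, eval_add, eval_X, eval_C, ha]
        have hbase : -(t + ((n+1 : ℕ) : ℚ) + 1) + (t + ((n+1-k : ℕ) : ℚ)) = -((k:ℚ)+1) := by
          rw [Nat.cast_sub hk']
          push_cast
          ring
        rw [hbase, neg_pow]
        have hmerge : (((k:ℚ)+1))^(k-1) * (((k:ℚ)+1))^(n+1-k) = ((k:ℚ)+1)^n := by
          rcases Nat.eq_zero_or_pos k with hk0 | hk0
          · subst hk0; simp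
          · rw [← pow_add]
            congr 1
            omega
        have hsign : (-1:ℚ)^(n+1-k) = (-1:ℚ)^(n+1) * (-1:ℚ)^k := by
          have : (-1:ℚ)^(n+1-k) * (-1:ℚ)^k = (-1:ℚ)^(n+1) := by
            rw [← pow_add]
            congr 1
            omega
          have hsq : ((-1:ℚ)^k) * ((-1:ℚ)^k) = 1 := by
            rw [← pow_add]
            exact Even.neg_one_pow ⟨k, rfl⟩
          linear_combination ((-1:ℚ)^k) * this - ((-1:ℚ)^(n+1-k)) * hsq
        push_cast
        rw [hsign]
        linear_combination ((-1:ℚ)^(n+1) * (-1:ℚ)^k * ((n+1).choose k : ℚ)) * hmerge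
      rw [Finset.sum_congr rfl hterm, ← Finset.mul_sum, findiff' n, mul_zero]
    have hc := Polynomial.eq_C_of_derivative_eq_zero
      (p := p - q) (by rw [derivative_sub, hder, sub_self])
    have he := congrArg (Polynomial.eval a) hc
    rw [eval_sub, hpe, hqe, sub_self, eval_C] at he
    rw [← he, C_0] at hc
    have hpq : p = q := sub_eq_zero.mp hc
    rw [hpq, hq]
    norm_cast

theorem Pval (m : ℕ) :
    ∑ k ∈ range (m+1), (m.choose k : ℚ) * ((k:ℚ)+1)^(k-1) * ((m+1-k : ℕ):ℚ)^(m-k)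
      = ((m:ℚ)+2)^m := by
  have h := congrArg (Polynomial.eval 0) (Gp_eq m 1)
  rw [eval_finset_sum, eval_pow, eval_add, eval_X, eval_C] at h
  rw [show (0 : ℚ) + (1 + (m:ℚ) + 1) = (m:ℚ)+2 from by ring] at h
  rw [← h]
  refine Finset.sum_congr rfl fun k hk => ?_
  have hk' : k ≤ m := Nat.lt_succ_iff.mp (Finset.mem_range.mp hk)
  rw [eval_mul, eval_C, eval_pow, eval_add, eval_X, eval_C]
  have hb : (0 : ℚ) + (1 + ((m-k : ℕ) : ℚ)) = ((m+1-k : ℕ) : ℚ) := by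
    rw [Nat.cast_sub hk', Nat.cast_sub (by omega)]
    push_cast; ring
  rw [hb]
  push_cast
  ring

theorem Qval (m : ℕ) :
    ∑ k ∈ range (m+1), (m.choose k : ℚ) * ((k:ℚ)+1)^k * ((m+1-k : ℕ):ℚ)^(m-k-1)
      = ((m:ℚ)+2)^m := by
  rw [← Pval m]
  rw [← Finset.sum_range_reflect (fun k => (m.choose k : ℚ) * ((k:ℚ)+1)^(k-1) * ((m+1-k : ℕ):ℚ)^(m-k)) (m+1)]
  refine Finset.sum_congr rfl fun k hk => ?_
  have hk' : k ≤ m := Nat.lt_succ_iff.mp (Finset.mem_range.mp hk)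
  simp only [Nat.add_sub_cancel]
  rw [Nat.choose_symm hk']
  have h1 : ((m - k : ℕ) : ℚ) + 1 = ((m+1-k : ℕ) : ℚ) := by
    rw [Nat.cast_sub hk', Nat.cast_sub (by omega)]; push_cast; ring
  have h2 : (m + 1 - (m - k) : ℕ) = k + 1 := by omega
  have h3 : (m - (m - k) : ℕ) = k := by omega
  have h4 : (m - k - 1 : ℕ) = m - k - 1 := rfl
  rw [h1, h2, h3]
  push_cast
  ring

theorem Aval (m : ℕ) (hm : 1 ≤ m) :
    ∑ k ∈ range (m+1), (m.choose k : ℚ) * ((k:ℚ)+1)^(k-1) * ((m+1-k : ℕ):ℚ)^(m-k-1)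
      = 2 * ((m:ℚ)+2)^(m-1) := by
  have hne : ((m:ℚ)+2) ≠ 0 := by positivity
  have key : ((m:ℚ)+2) * ∑ k ∈ range (m+1),
      (m.choose k : ℚ) * ((k:ℚ)+1)^(k-1) * ((m+1-k : ℕ):ℚ)^(m-k-1) = 2 * ((m:ℚ)+2)^m := by
    rw [Finset.mul_sum]
    have hterm : ∀ k ∈ range (m+1),
        ((m:ℚ)+2) * ((m.choose k : ℚ) * ((k:ℚ)+1)^(k-1) * ((m+1-k : ℕ):ℚ)^(m-k-1))
        = (m.choose k : ℚ) * ((k:ℚ)+1)^(k-1) * ((m+1-k : ℕ):ℚ)^(m-k)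
          + (m.choose k : ℚ) * ((k:ℚ)+1)^k * ((m+1-k : ℕ):ℚ)^(m-k-1) := by
      intro k hk
      have hk' : k ≤ m := Nat.lt_succ_iff.mp (Finset.mem_range.mp hk)
      have hB : ((m+1-k : ℕ) : ℚ) ^ (m-k) = ((m+1-k : ℕ) : ℚ) * ((m+1-k : ℕ) : ℚ)^(m-k-1) := by
        rcases Nat.lt_or_ge k m with h | h
        · obtain ⟨e, he⟩ : ∃ e, m - k = e + 1 := ⟨m-k-1, by omega⟩
          rw [he, Nat.add_sub_cancel, pow_succ]
          ring
        · have : k = m := le_antisymm hk' h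
          subst this
          simp
      have hA : ((k:ℚ)+1)^k = ((k:ℚ)+1) * ((k:ℚ)+1)^(k-1) := by
        rcases Nat.eq_zero_or_pos k with h | h
        · subst h; norm_num
        · obtain ⟨e, he⟩ : ∃ e, k = e + 1 := ⟨k-1, by omega⟩
          rw [show ((k:ℚ)+1)^k = ((k:ℚ)+1)^(e+1) from by rw [← he], pow_succ,
            show k - 1 = e by omega]
          ring
      have hsum : ((m+1-k : ℕ) : ℚ) + ((k:ℚ)+1) = (m:ℚ) + 2 := by
        rw [Nat.cast_sub (by omega)]; push_cast; ring
      rw [hB, hA]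
      linear_combination (-((m.choose k : ℚ)) * ((k:ℚ)+1)^(k-1) * ((m+1-k : ℕ):ℚ)^(m-k-1)) * hsum
    rw [Finset.sum_congr rfl hterm, Finset.sum_add_distrib, Pval m, Qval m]
    ring
  have hpow : ((m:ℚ)+2)^m = ((m:ℚ)+2) * ((m:ℚ)+2)^(m-1) := by
    rw [show m = (m-1)+1 by omega, pow_succ]
    rw [show (m-1)+1-1 = m-1 by omega]
    ring
  rw [hpow] at key
  exact mul_left_cancel₀ hne (key.trans (by ring))


/-- The identity (eq:long in the paper): for `n ≥ 3`,
`Σ_{i=1}^{n-3} C(n-1, i-1) * (n-i+1)^(n-i-1) * i^(i-2)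
  = 2*(n+1)^(n-2) - n^(n-2) - (n-1)^(n-2) - (3/2)*(n-1)*(n-2)^(n-3)` in `ℚ`. -/
theorem abel_identity_truncated (n : ℕ) (hn : 3 ≤ n) :
    (∑ i ∈ Finset.Icc 1 (n - 3),
        ((Nat.choose (n - 1) (i - 1) * (n + 1 - i) ^ (n - i - 1) * i ^ (i - 2) : ℕ) : ℚ)) =
      2 * ((n + 1) ^ (n - 2) : ℕ) - (n ^ (n - 2) : ℕ) - ((n - 1) ^ (n - 2) : ℕ) -
        (3 / 2 : ℚ) * ((n - 1) * (n - 2) ^ (n - 3) : ℕ) := by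
  obtain ⟨d, rfl⟩ : ∃ d, n = d + 3 := ⟨n - 3, by omega⟩
  set f : ℕ → ℚ := fun i =>
    (((d+3-1).choose (i-1) * (d+3+1-i)^(d+3-i-1) * i^(i-2) : ℕ) : ℚ) with hf
  have hfull : ∑ i ∈ Finset.Icc 1 (d+3), f i = 2 * ((d:ℚ)+4)^(d+1) := by
    rw [← Finset.Ico_add_one_right_eq_Icc, Finset.sum_Ico_eq_sum_range]
    have hA := Aval (d+2) (by omega)
    rw [show d+2-1 = d+1 from rfl, show ((d+2:ℕ):ℚ)+2 = (d:ℚ)+4 from by push_cast; ring] at hA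
    rw [show d+3+1-1 = (d+2)+1 from rfl, ← hA]
    refine Finset.sum_congr rfl fun k hk => ?_
    have hk' : k ≤ d + 2 := Nat.lt_succ_iff.mp (Finset.mem_range.mp hk)
    show (((d+2).choose ((1+k)-1) * (d+4-(1+k))^(d+3-(1+k)-1) * (1+k)^((1+k)-2) : ℕ) : ℚ) = _
    have e1 : (1+k)-1 = k := by omega
    have e2 : d+4-(1+k) = d+2+1-k := by omega
    have e3 : d+3-(1+k)-1 = d+2-k-1 := by omega
    have e4 : (1+k)-2 = k-1 := by omega
    rw [e1, e2, e3, e4]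
    push_cast
    ring
  have hsplit : ∑ i ∈ Finset.Icc 1 (d+3), f i
      = ∑ i ∈ Finset.Icc 1 d, f i + f (d+1) + f (d+2) + f (d+3) := by
    rw [show d+3 = (d+2)+1 from rfl, Finset.sum_Icc_succ_top (by omega),
      show d+2 = (d+1)+1 from rfl, Finset.sum_Icc_succ_top (by omega),
      Finset.sum_Icc_succ_top (by omega)]
  have h3 : f (d+3) = ((d:ℚ)+3)^(d+1) := by
    show (((d+2).choose ((d+3)-1) * (d+4-(d+3))^(d+3-(d+3)-1) * (d+3)^((d+3)-2) : ℕ) : ℚ) = _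
    rw [show (d+3)-1 = d+2 from rfl, show d+4-(d+3) = 1 by omega, show (d+3)-2 = d+1 from rfl,
      Nat.choose_self]
    push_cast
    ring
  have h2 : f (d+2) = ((d:ℚ)+2)^(d+1) := by
    show (((d+2).choose ((d+2)-1) * (d+4-(d+2))^(d+3-(d+2)-1) * (d+2)^((d+2)-2) : ℕ) : ℚ) = _
    rw [show (d+2)-1 = d+1 from rfl, show d+4-(d+2) = 2 by omega, show d+3-(d+2)-1 = 0 by omega,
      show (d+2)-2 = d from rfl]
    rw [Nat.choose_succ_self_right]
    push_cast
    rw [pow_succ]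
    ring
  have h1 : f (d+1) = (3/2 : ℚ) * ((d:ℚ)+2) * ((d:ℚ)+1)^d := by
    show (((d+2).choose ((d+1)-1) * (d+4-(d+1))^(d+3-(d+1)-1) * (d+1)^((d+1)-2) : ℕ) : ℚ) = _
    rw [show (d+1)-1 = d from rfl, show d+4-(d+1) = 3 by omega, show d+3-(d+1)-1 = 1 by omega,
      show (d+1)-2 = d-1 from by omega]
    have hch : ((d+2).choose d : ℚ) * 2 = ((d:ℚ)+2) * ((d:ℚ)+1) := by
      have h2d : (d+2).choose d = (d+2).choose 2 := by
        rw [← Nat.choose_symm (by omega)]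
        congr 1
        omega
      have hdvd : (2:ℕ) ∣ (d+2)*(d+1) := by
        have := (Nat.even_mul_succ_self (d+1)).two_dvd
        rwa [mul_comm] at this
      have heven : (d+2).choose 2 * 2 = (d+2)*(d+1) := by
        rw [Nat.choose_two_right, show (d+2) - 1 = d+1 from rfl, Nat.div_mul_cancel hdvd]
      have : (d+2).choose d * 2 = (d+2)*(d+1) := by rw [h2d]; exact heven
      exact_mod_cast congrArg (fun x : ℕ => (x : ℚ)) this
    rcases Nat.eq_zero_or_pos d with hd0 | hd0
    · subst hd0; norm_num
    · obtain ⟨e, he⟩ : ∃ e, d = e + 1 := ⟨d-1, by omega⟩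
      subst he
      rw [show (e+1)-1 = e from rfl]
      push_cast
      push_cast at hch
      rw [pow_succ]
      linear_combination ((3/2:ℚ)*((e:ℚ)+1+1)^e) * hch
  show (∑ i ∈ Finset.Icc 1 d, f i)
      = 2*(((d+4)^(d+1) : ℕ) : ℚ) - (((d+3)^(d+1) : ℕ) : ℚ) - (((d+2)^(d+1) : ℕ) : ℚ)
        - (3/2 : ℚ) * (((d+2)*(d+1)^d : ℕ) : ℚ)
  push_cast
  linarith [hsplit, hfull, h1, h2, h3]
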